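/- For every t > 0, the spatial derivative of c_e exists at x = 0 and at x = L and satisfies the constant-flux Neumann boundary conditions ∂c_e/∂x (0,t) = −β and ∂c_e/∂x (L,t) = −β. -/

import Mathlib

open Real

/-- For every `t > 0`, the spatial derivative of the analytical electrolyte
concentration exists at `x = 0` and `x = L` and satisfies the constant-flux
Neumann boundary conditions `∂c_e/∂x(0,t) = −β` and `∂c_e/∂x(L,t) = −β`. -/
theorem stmt_4 (L D β cI : ℝ) (hL : 0 < L) (hD : 0 < D)
    (ce : ℝ × ℝ → ℝ)
    (hce : ∀ x t : ℝ, ce (x, t) =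
      cI + β * (L / 2 - x) -
        4 * β * L *
          ∑' k : ℕ, (1 / ((2 * (k : ℝ) + 1) ^ 2 * Real.pi ^ 2)) *
            Real.cos ((2 * (k : ℝ) + 1) * Real.pi * x / L) *
            Real.exp (-(((2 * (k : ℝ) + 1) * Real.pi / L) ^ 2 * D * t))) :
    ∀ t : ℝ, 0 < t →
      HasDerivAt (fun y : ℝ => ce (y, t)) (-β) 0 ∧
      HasDerivAt (fun y : ℝ => ce (y, t)) (-β) L := by
  intro t ht
  have hπ := Real.pi_pos
  have hL' : L ≠ 0 := ne_of_gt hL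
  set a : ℝ := (Real.pi / L) ^ 2 * D * t with ha
  have hapos : 0 < a := by positivity
  set r : ℝ := Real.exp (-a) with hr
  have hr0 : 0 ≤ r := Real.exp_nonneg _
  have hr1 : r < 1 := Real.exp_lt_one_iff.mpr (by linarith)
  -- the summands and their derivatives
  set g : ℕ → ℝ → ℝ := fun k x =>
    (1 / ((2 * (k : ℝ) + 1) ^ 2 * Real.pi ^ 2)) *
      Real.cos ((2 * (k : ℝ) + 1) * Real.pi * x / L) *
      Real.exp (-(((2 * (k : ℝ) + 1) * Real.pi / L) ^ 2 * D * t)) with hg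
  set g' : ℕ → ℝ → ℝ := fun k x =>
    (1 / ((2 * (k : ℝ) + 1) ^ 2 * Real.pi ^ 2)) *
      (-Real.sin ((2 * (k : ℝ) + 1) * Real.pi * x / L) * ((2 * (k : ℝ) + 1) * Real.pi / L)) *
      Real.exp (-(((2 * (k : ℝ) + 1) * Real.pi / L) ^ 2 * D * t)) with hg'
  set u : ℕ → ℝ := fun k => (1 / (Real.pi * L)) * r ^ k with hu
  have hEbound : ∀ k : ℕ,
      Real.exp (-(((2 * (k : ℝ) + 1) * Real.pi / L) ^ 2 * D * t)) ≤ r ^ k := by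
    intro k
    have hk0 : (0 : ℝ) ≤ (k : ℝ) := Nat.cast_nonneg k
    have h1 : (k : ℝ) * a ≤ ((2 * (k : ℝ) + 1) * Real.pi / L) ^ 2 * D * t := by
      have h2 : ((2 * (k : ℝ) + 1) * Real.pi / L) ^ 2 * D * t
          = (2 * (k : ℝ) + 1) ^ 2 * a := by rw [ha]; field_simp
      rw [h2]
      have : (k : ℝ) ≤ (2 * (k : ℝ) + 1) ^ 2 := by nlinarith
      nlinarith
    calc Real.exp (-(((2 * (k : ℝ) + 1) * Real.pi / L) ^ 2 * D * t))
        ≤ Real.exp (-((k : ℝ) * a)) := Real.exp_le_exp.mpr (by linarith)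
      _ = r ^ k := by rw [hr, ← Real.exp_nat_mul]; ring_nf
  have hu_sum : Summable u := (summable_geometric_of_lt_one hr0 hr1).mul_left _
  have hderiv : ∀ k : ℕ, ∀ y : ℝ, HasDerivAt (g k) (g' k y) y := by
    intro k y
    have h1 : HasDerivAt (fun x : ℝ => (2 * (k : ℝ) + 1) * Real.pi * x / L)
        ((2 * (k : ℝ) + 1) * Real.pi / L) y := by
      simpa using ((hasDerivAt_id y).const_mul ((2 * (k : ℝ) + 1) * Real.pi)).div_const L
    have h2 := h1.cos
    exact (h2.const_mul _).mul_const _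
  have hbound : ∀ k : ℕ, ∀ y : ℝ, ‖g' k y‖ ≤ u k := by
    intro k y
    have hk1 : (1 : ℝ) ≤ 2 * (k : ℝ) + 1 := by
      have := Nat.cast_nonneg (α := ℝ) k; linarith
    have hE := hEbound k
    have hEpos : (0 : ℝ) < Real.exp (-(((2 * (k : ℝ) + 1) * Real.pi / L) ^ 2 * D * t)) :=
      Real.exp_pos _
    rw [hg', Real.norm_eq_abs, abs_mul, abs_mul]
    have hsin : |(-Real.sin ((2 * (k : ℝ) + 1) * Real.pi * y / L) *
        ((2 * (k : ℝ) + 1) * Real.pi / L))| ≤ (2 * (k : ℝ) + 1) * Real.pi / L := by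
      rw [abs_mul, abs_neg]
      have h1 : |Real.sin ((2 * (k : ℝ) + 1) * Real.pi * y / L)| ≤ 1 := Real.abs_sin_le_one _
      have h2 : |(2 * (k : ℝ) + 1) * Real.pi / L| = (2 * (k : ℝ) + 1) * Real.pi / L := by
        rw [abs_of_pos]; positivity
      rw [h2]
      nlinarith [abs_nonneg (Real.sin ((2 * (k : ℝ) + 1) * Real.pi * y / L)), pi_pos,
        div_pos (by positivity : (0:ℝ) < (2 * (k : ℝ) + 1) * Real.pi) hL]
    have hC : |(1 : ℝ) / ((2 * (k : ℝ) + 1) ^ 2 * Real.pi ^ 2)|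
        = 1 / ((2 * (k : ℝ) + 1) ^ 2 * Real.pi ^ 2) := by
      rw [abs_of_pos]; positivity
    have habsE : |Real.exp (-(((2 * (k : ℝ) + 1) * Real.pi / L) ^ 2 * D * t))|
        = Real.exp (-(((2 * (k : ℝ) + 1) * Real.pi / L) ^ 2 * D * t)) :=
      abs_of_pos hEpos
    rw [hC, habsE]
    have hstep : (1 / ((2 * (k : ℝ) + 1) ^ 2 * Real.pi ^ 2)) *
        |(-Real.sin ((2 * (k : ℝ) + 1) * Real.pi * y / L) *
          ((2 * (k : ℝ) + 1) * Real.pi / L))| ≤ 1 / (Real.pi * L) := by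
      have h3 : (1 / ((2 * (k : ℝ) + 1) ^ 2 * Real.pi ^ 2)) *
          ((2 * (k : ℝ) + 1) * Real.pi / L) = 1 / ((2 * (k : ℝ) + 1) * Real.pi * L) := by
        field_simp
      have h4 : (1 / ((2 * (k : ℝ) + 1) ^ 2 * Real.pi ^ 2)) *
          |(-Real.sin ((2 * (k : ℝ) + 1) * Real.pi * y / L) *
            ((2 * (k : ℝ) + 1) * Real.pi / L))|
          ≤ 1 / ((2 * (k : ℝ) + 1) * Real.pi * L) := by
        rw [← h3]
        exact mul_le_mul_of_nonneg_left hsin (by positivity)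
      refine h4.trans ?_
      apply div_le_div_of_nonneg_left one_pos.le (by positivity)
      nlinarith [mul_pos pi_pos hL]
    show _ * _ * _ ≤ (1 / (Real.pi * L)) * r ^ k
    exact mul_le_mul hstep hE hEpos.le (by positivity)
  have hg0_sum : Summable fun k => g k 0 := by
    apply Summable.of_norm
    refine Summable.of_nonneg_of_le (fun k => norm_nonneg _)
      (fun k => ?_) ((summable_geometric_of_lt_one hr0 hr1).mul_left (1 / Real.pi ^ 2))
    rw [Real.norm_eq_abs, hg]
    simp only [abs_mul]
    have hk1 : (1 : ℝ) ≤ 2 * (k : ℝ) + 1 := by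
      have := Nat.cast_nonneg (α := ℝ) k; linarith
    have h1 : |(1 : ℝ) / ((2 * (k : ℝ) + 1) ^ 2 * Real.pi ^ 2)| ≤ 1 / Real.pi ^ 2 := by
      rw [abs_of_pos (by positivity)]
      apply div_le_div_of_nonneg_left one_pos.le (by positivity)
      nlinarith [sq_nonneg Real.pi, pi_pos, sq_nonneg (2 * (k : ℝ) + 1 - 1)]
    have h2 : |Real.cos ((2 * (k : ℝ) + 1) * Real.pi * 0 / L)| ≤ 1 := Real.abs_cos_le_one _
    have h3 := hEbound k
    have h4 : |Real.exp (-(((2 * (k : ℝ) + 1) * Real.pi / L) ^ 2 * D * t))| ≤ r ^ k := by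
      rw [abs_of_pos (Real.exp_pos _)]; exact h3
    have h5 : |(1:ℝ) / ((2 * (k : ℝ) + 1) ^ 2 * Real.pi ^ 2)| *
        |Real.cos ((2 * (k : ℝ) + 1) * Real.pi * 0 / L)| ≤ 1 / Real.pi ^ 2 := by
      have := mul_le_mul h1 h2 (abs_nonneg _) (by positivity)
      simpa using this
    have := mul_le_mul h5 h4 (abs_nonneg _) (by positivity)
    exact this
  have hS : ∀ y : ℝ, HasDerivAt (fun z => ∑' k, g k z) (∑' k, g' k y) y := fun y =>
    hasDerivAt_tsum hu_sum hderiv hbound hg0_sum y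
  have hzero0 : (∑' k, g' k 0) = 0 := by
    have h : (fun k : ℕ => g' k 0) = fun _ => (0 : ℝ) := by
      funext k; simp [hg']
    rw [h, tsum_zero]
  have hzeroL : (∑' k, g' k L) = 0 := by
    have h : (fun k : ℕ => g' k L) = fun _ => (0 : ℝ) := by
      funext k
      have hsin : Real.sin ((2 * (k : ℝ) + 1) * Real.pi * L / L) = 0 := by
        rw [mul_div_assoc, div_self hL', mul_one]
        have hcast : (2 * (k : ℝ) + 1) * Real.pi = ((2 * (k : ℤ) + 1) : ℤ) * Real.pi := by
          push_cast; ring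
        rw [hcast]
        exact Real.sin_int_mul_pi _
      simp [hg', hsin]
    rw [h, tsum_zero]
  have hmain : ∀ y : ℝ, ∀ d : ℝ, (∑' k, g' k y) = 0 →
      HasDerivAt (fun z : ℝ => ce (z, t)) (-β) y := by
    intro y d h0
    have h1 : HasDerivAt (fun z : ℝ => cI + β * (L / 2 - z) - 4 * β * L * ∑' k, g k z)
        (-β) y := by
      have hlin : HasDerivAt (fun z : ℝ => cI + β * (L / 2 - z)) (-β) y := by
        have : HasDerivAt (fun z : ℝ => L / 2 - z) (-1) y := by
          simpa using (hasDerivAt_id y).const_sub (L / 2)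
        simpa using (this.const_mul β).const_add cI
      have := hlin.sub (((hS y).const_mul (4 * β * L)))
      rw [h0, mul_zero, sub_zero] at this
      exact this
    have : (fun z : ℝ => ce (z, t)) =
        fun z : ℝ => cI + β * (L / 2 - z) - 4 * β * L * ∑' k, g k z := by
      funext z; rw [hce]
    rw [this]
    exact h1
  exact ⟨hmain 0 0 hzero0, hmain L 0 hzeroL⟩
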